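/- Let a, b, i, j, k, r be integers with a, b, r ≥ 1, gcd(a,b) = 1, and i, j, k ∈ {0,1}; set c := a+b, m := c·i + a·k + a·c·r, n := c·j + b·k + b·c·r. Let Z ∈ ℚ(s) be the rational function Z := −s/(s+1) · (c·r)/((m·s+a+c)·(n·s+b+c)) + b/((i·s+1)·(j·s+1)·(n·s+b+c)) + (a·c)/((n·s+b+c)·(m·s+a+c)·(i·s+1)) + c²/((k·s+1)·(n·s+b+c)·(m·s+a+c)). Then every pole of Z (i.e., every root of the denominator of Z written in lowest terms) belongs to the set {−1, −(a+c)/m, −(b+c)/n}. -/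

import Mathlib

open Polynomial

private lemma lin_ne_zero (q e : ℚ) (he : e ≠ 0) :
    RatFunc.C q * RatFunc.X + RatFunc.C e ≠ 0 := by
  have hpoly : (Polynomial.C q * Polynomial.X + Polynomial.C e : ℚ[X]) ≠ 0 := by
    intro h
    exact he (by simpa using congrArg (Polynomial.eval 0) h)
  have h := RatFunc.algebraMap_ne_zero hpoly
  simpa [RatFunc.algebraMap_C, RatFunc.algebraMap_X] using h

set_option maxHeartbeats 1000000 in
/-- Every pole of the local topological zeta function `Z ∈ ℚ(s)` of an extremely
degenerated reduced homogeneous polynomial, i.e. every root of the denominator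
of `Z` written in lowest terms, lies in `{−1, −(a+c)/m, −(b+c)/n}`. -/
theorem stmt3 (a b i j k r : ℤ)
    (ha : 1 ≤ a) (hb : 1 ≤ b) (hr : 1 ≤ r)
    (hab : IsCoprime a b)
    (hi : i = 0 ∨ i = 1) (hj : j = 0 ∨ j = 1) (hk : k = 0 ∨ k = 1)
    (c m n : ℤ)
    (hc : c = a + b)
    (hm : m = c * i + a * k + a * c * r)
    (hn : n = c * j + b * k + b * c * r)
    (Z : RatFunc ℚ)
    (hZ : Z = -RatFunc.X / (RatFunc.X + 1)
          * (RatFunc.C ((c : ℚ) * r)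
              / ((RatFunc.C (m : ℚ) * RatFunc.X + RatFunc.C ((a : ℚ) + c))
                  * (RatFunc.C (n : ℚ) * RatFunc.X + RatFunc.C ((b : ℚ) + c))))
        + RatFunc.C (b : ℚ)
            / ((RatFunc.C (i : ℚ) * RatFunc.X + 1) * (RatFunc.C (j : ℚ) * RatFunc.X + 1)
                * (RatFunc.C (n : ℚ) * RatFunc.X + RatFunc.C ((b : ℚ) + c)))
        + RatFunc.C ((a : ℚ) * c)
            / ((RatFunc.C (n : ℚ) * RatFunc.X + RatFunc.C ((b : ℚ) + c))
                * (RatFunc.C (m : ℚ) * RatFunc.X + RatFunc.C ((a : ℚ) + c))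
                * (RatFunc.C (i : ℚ) * RatFunc.X + 1))
        + RatFunc.C ((c : ℚ) ^ 2)
            / ((RatFunc.C (k : ℚ) * RatFunc.X + 1)
                * (RatFunc.C (n : ℚ) * RatFunc.X + RatFunc.C ((b : ℚ) + c))
                * (RatFunc.C (m : ℚ) * RatFunc.X + RatFunc.C ((a : ℚ) + c)))) :
    ∀ x : ℚ, Polynomial.eval x Z.denom = 0 →
      x = -1 ∨ x = -(((a : ℚ) + c) / m) ∨ x = -(((b : ℚ) + c) / n) := by
  -- positivity facts
  have hi' : 0 ≤ i := by rcases hi with h | h <;> omega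
  have hj' : 0 ≤ j := by rcases hj with h | h <;> omega
  have hk' : 0 ≤ k := by rcases hk with h | h <;> omega
  have hc0 : (0:ℤ) < c := by omega
  have hm0 : (0:ℤ) < m := by
    have h1 : 0 ≤ c * i := mul_nonneg hc0.le hi'
    have h2 : 0 ≤ a * k := mul_nonneg (by omega) hk'
    have h3 : 0 < a * c * r := by positivity
    omega
  have hn0 : (0:ℤ) < n := by
    have h1 : 0 ≤ c * j := mul_nonneg hc0.le hj'
    have h2 : 0 ≤ b * k := mul_nonneg (by omega) hk'
    have h3 : 0 < b * c * r := by positivity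
    omega
  have hmQ : (m:ℚ) ≠ 0 := by exact_mod_cast hm0.ne'
  have hnQ : (n:ℚ) ≠ 0 := by exact_mod_cast hn0.ne'
  have hacQ : ((a:ℚ) + c) ≠ 0 := by
    have : (0:ℤ) < a + c := by omega
    push_cast
    exact_mod_cast this.ne'
  have hbcQ : ((b:ℚ) + c) ≠ 0 := by
    have : (0:ℤ) < b + c := by omega
    push_cast
    exact_mod_cast this.ne'
  -- polynomial denominators
  set d1 : ℚ[X] := X + 1 with hd1def
  set d2 : ℚ[X] := C (i:ℚ) * X + 1 with hd2def
  set d3 : ℚ[X] := C (j:ℚ) * X + 1 with hd3def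
  set d4 : ℚ[X] := C (k:ℚ) * X + 1 with hd4def
  set d5 : ℚ[X] := C (m:ℚ) * X + C ((a:ℚ) + c) with hd5def
  set d6 : ℚ[X] := C (n:ℚ) * X + C ((b:ℚ) + c) with hd6def
  have hd1 : d1 ≠ 0 := fun h => (one_ne_zero : (1:ℚ) ≠ 0) (by simpa [hd1def] using congrArg (eval 0) h)
  have hd2 : d2 ≠ 0 := fun h => (one_ne_zero : (1:ℚ) ≠ 0) (by simpa [hd2def] using congrArg (eval 0) h)
  have hd3 : d3 ≠ 0 := fun h => (one_ne_zero : (1:ℚ) ≠ 0) (by simpa [hd3def] using congrArg (eval 0) h)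
  have hd4 : d4 ≠ 0 := fun h => (one_ne_zero : (1:ℚ) ≠ 0) (by simpa [hd4def] using congrArg (eval 0) h)
  have hd5 : d5 ≠ 0 := fun h => hacQ (by simpa [hd5def] using congrArg (eval 0) h)
  have hd6 : d6 ≠ 0 := fun h => hbcQ (by simpa [hd6def] using congrArg (eval 0) h)
  set Q : ℚ[X] := d1 * d2 * d3 * d4 * d5 * d6 with hQdef
  have hQ : Q ≠ 0 := by
    simp only [hQdef]
    exact mul_ne_zero (mul_ne_zero (mul_ne_zero (mul_ne_zero (mul_ne_zero hd1 hd2) hd3) hd4) hd5) hd6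
  set P : ℚ[X] := -X * C ((c:ℚ) * r) * (d2 * d3 * d4) + C (b:ℚ) * (d1 * d4 * d5)
      + C ((a:ℚ) * c) * (d1 * d3 * d4) + C ((c:ℚ)^2) * (d1 * d2 * d3) with hPdef
  -- nonzero denominators in RatFunc
  have e1 : (RatFunc.X + 1 : RatFunc ℚ) ≠ 0 := by
    have := lin_ne_zero 1 1 one_ne_zero
    simpa using this
  have e2 : (RatFunc.C (i:ℚ) * RatFunc.X + 1 : RatFunc ℚ) ≠ 0 := by
    have := lin_ne_zero (i:ℚ) 1 one_ne_zero
    simpa using this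
  have e3 : (RatFunc.C (j:ℚ) * RatFunc.X + 1 : RatFunc ℚ) ≠ 0 := by
    have := lin_ne_zero (j:ℚ) 1 one_ne_zero
    simpa using this
  have e4 : (RatFunc.C (k:ℚ) * RatFunc.X + 1 : RatFunc ℚ) ≠ 0 := by
    have := lin_ne_zero (k:ℚ) 1 one_ne_zero
    simpa using this
  have e5 : (RatFunc.C (m:ℚ) * RatFunc.X + RatFunc.C ((a:ℚ) + c) : RatFunc ℚ) ≠ 0 :=
    lin_ne_zero _ _ hacQ
  have e6 : (RatFunc.C (n:ℚ) * RatFunc.X + RatFunc.C ((b:ℚ) + c) : RatFunc ℚ) ≠ 0 :=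
    lin_ne_zero _ _ hbcQ
  -- the representation Z = P / Q
  have f1 : (RatFunc.X + 1 : RatFunc ℚ) = algebraMap ℚ[X] (RatFunc ℚ) d1 := by
    rw [hd1def]; simp [map_add, map_one, RatFunc.algebraMap_X]
  have f2 : (RatFunc.C (i:ℚ) * RatFunc.X + 1 : RatFunc ℚ) = algebraMap ℚ[X] (RatFunc ℚ) d2 := by
    rw [hd2def]; simp [map_add, map_mul, map_one, RatFunc.algebraMap_X, RatFunc.algebraMap_C]
  have f3 : (RatFunc.C (j:ℚ) * RatFunc.X + 1 : RatFunc ℚ) = algebraMap ℚ[X] (RatFunc ℚ) d3 := by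
    rw [hd3def]; simp [map_add, map_mul, map_one, RatFunc.algebraMap_X, RatFunc.algebraMap_C]
  have f4 : (RatFunc.C (k:ℚ) * RatFunc.X + 1 : RatFunc ℚ) = algebraMap ℚ[X] (RatFunc ℚ) d4 := by
    rw [hd4def]; simp [map_add, map_mul, map_one, RatFunc.algebraMap_X, RatFunc.algebraMap_C]
  have f5 : (RatFunc.C (m:ℚ) * RatFunc.X + RatFunc.C ((a:ℚ) + c) : RatFunc ℚ)
      = algebraMap ℚ[X] (RatFunc ℚ) d5 := by
    rw [hd5def]; simp [map_add, map_mul, RatFunc.algebraMap_X, RatFunc.algebraMap_C]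
  have f6 : (RatFunc.C (n:ℚ) * RatFunc.X + RatFunc.C ((b:ℚ) + c) : RatFunc ℚ)
      = algebraMap ℚ[X] (RatFunc ℚ) d6 := by
    rw [hd6def]; simp [map_add, map_mul, RatFunc.algebraMap_X, RatFunc.algebraMap_C]
  have g1 := RatFunc.algebraMap_ne_zero hd1
  have g2 := RatFunc.algebraMap_ne_zero hd2
  have g3 := RatFunc.algebraMap_ne_zero hd3
  have g4 := RatFunc.algebraMap_ne_zero hd4
  have g5 := RatFunc.algebraMap_ne_zero hd5
  have g6 := RatFunc.algebraMap_ne_zero hd6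
  have gQ := RatFunc.algebraMap_ne_zero hQ
  have hrepr : Z = algebraMap ℚ[X] (RatFunc ℚ) P / algebraMap ℚ[X] (RatFunc ℚ) Q := by
    have cancel : ∀ (N D E : ℚ[X]), D ≠ 0 → D * E = Q →
        algebraMap ℚ[X] (RatFunc ℚ) N / algebraMap ℚ[X] (RatFunc ℚ) D
          = algebraMap ℚ[X] (RatFunc ℚ) (N * E) / algebraMap ℚ[X] (RatFunc ℚ) Q := by
      intro N D E hD hDE
      rw [div_eq_div_iff (RatFunc.algebraMap_ne_zero hD) gQ, ← map_mul, ← map_mul]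
      exact congrArg _ (by rw [← hDE]; ring)
    rw [hZ, f1, f2, f3, f4, f5, f6]
    simp only [← RatFunc.algebraMap_C, ← RatFunc.algebraMap_X, ← map_neg,
      div_mul_div_comm, ← map_mul]
    rw [cancel (-Polynomial.X * Polynomial.C ((c:ℚ) * r)) (d1 * (d5 * d6)) (d2 * d3 * d4)
          (mul_ne_zero hd1 (mul_ne_zero hd5 hd6)) (by rw [hQdef]; ring),
        cancel (Polynomial.C (b:ℚ)) (d2 * d3 * d6) (d1 * d4 * d5)
          (mul_ne_zero (mul_ne_zero hd2 hd3) hd6) (by rw [hQdef]; ring),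
        cancel (Polynomial.C ((a:ℚ) * c)) (d6 * d5 * d2) (d1 * d3 * d4)
          (mul_ne_zero (mul_ne_zero hd6 hd5) hd2) (by rw [hQdef]; ring),
        cancel (Polynomial.C ((c:ℚ) ^ 2)) (d4 * d6 * d5) (d1 * d2 * d3)
          (mul_ne_zero (mul_ne_zero hd4 hd6) hd5) (by rw [hQdef]; ring),
        ← add_div, ← add_div, ← add_div, ← map_add, ← map_add, ← map_add]
  have hden : Z.denom ∣ Q := (RatFunc.denom_dvd hQ).mpr ⟨P, hrepr⟩
  intro x hx
  obtain ⟨t, ht⟩ := hden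
  have hQx : eval x Q = 0 := by rw [ht, eval_mul, hx, zero_mul]
  have hfac : (x + 1) * ((i:ℚ) * x + 1) * ((j:ℚ) * x + 1) * ((k:ℚ) * x + 1)
      * ((m:ℚ) * x + ((a:ℚ) + c)) * ((n:ℚ) * x + ((b:ℚ) + c)) = 0 := by
    simpa [hQdef, hd1def, hd2def, hd3def, hd4def, hd5def, hd6def] using hQx
  rcases mul_eq_zero.mp hfac with h | h
  · rcases mul_eq_zero.mp h with h | h
    · rcases mul_eq_zero.mp h with h | h
      · rcases mul_eq_zero.mp h with h | h
        · rcases mul_eq_zero.mp h with h | h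
          · left; linarith
          · -- i-factor
            rcases hi with rfl | rfl
            · norm_num at h
            · left; push_cast at h; linarith
        · rcases hj with rfl | rfl
          · norm_num at h
          · left; push_cast at h; linarith
      · rcases hk with rfl | rfl
        · norm_num at h
        · left; push_cast at h; linarith
    · right; left
      field_simp
      linarith
  · right; right
    field_simp
    linarith
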